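/- (Black hole topology along a null ray) Let (M,g̃) be a warped product spacetime satisfying the dominant energy condition, γ a null geodesic segment in (Q,g) with geodesic tangent L, and N the transverse null field with ⟨L,N⟩ = −1, ∇_L N = 0. If at a point p on γ one has N(r) > 0 and at a later point q one has N(r) ≤ 0, then the scalar curvature S^h of the fiber is strictly positive. -/
import Mathlib


/-- (Black hole topology along a null ray) Let `(M,g̃)` be a warped product spacetime
satisfying the dominant energy condition, `γ` a null geodesic segment in `(Q,g)` with
geodesic tangent `L`, and `N` the transverse null field with `⟨L,N⟩ = −1`, `∇_L N = 0`.
If at a point `p = γ(tp)` one has `N(r) > 0` and at a later point `q = γ(tq)` one has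
`N(r) ≤ 0`, then the scalar curvature `S^h` of the fiber is strictly positive.
Along `γ` (parametrized by `t ∈ ℝ`): `N(rⁿ) = n r^{n−1} N(r)`, the propagation
equation `(N(rⁿ))' = rⁿ G_Q(L,N) − (r^{n−2}/2) S^h` holds, and the dominant energy
condition gives `G_Q(L,N) ≥ 0`. -/
theorem black_hole_topology_null_ray
    (n : ℕ) (hn : 2 ≤ n)
    (Sh : ℝ)                                  -- the (constant) fiber scalar curvature
    (r Nr Nrn GLN : ℝ → ℝ)                    -- r, N(r), N(rⁿ), G_Q(L,N) along γ
    (hr : ∀ t, 0 < r t)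
    (hNrn : ∀ t, Nrn t = (n : ℝ) * r t ^ (n - 1) * Nr t)
    (hdiff : Differentiable ℝ Nrn)
    -- the cross propagation equation along the null geodesic γ
    (hprop : ∀ t, deriv Nrn t = r t ^ n * GLN t - r t ^ (n - 2) / 2 * Sh)
    -- dominant energy condition: G_Q(L,N) ≥ 0 for future-directed null L, N
    (hDEC : ∀ t, 0 ≤ GLN t)
    (tp tq : ℝ) (htpq : tp < tq)               -- q is to the future of p
    (hNp : 0 < Nr tp)                          -- N(r) > 0 at p
    (hNq : Nr tq ≤ 0) :                        -- N(r) ≤ 0 at q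
    0 < Sh := by
  obtain ⟨c, hc, hderiv⟩ := exists_deriv_eq_slope Nrn htpq
    (hdiff.continuous.continuousOn) (fun x _ => (hdiff x).differentiableWithinAt)
  have hnpos : (0:ℝ) < n := by exact_mod_cast Nat.lt_of_lt_of_le Nat.zero_lt_two hn
  have hrp := hr tp
  have hrq := hr tq
  have hrc := hr c
  have hNrntp : 0 < Nrn tp := by
    rw [hNrn tp]
    have : 0 < r tp ^ (n - 1) := pow_pos hrp _
    positivity
  have hNrntq : Nrn tq ≤ 0 := by
    rw [hNrn tq]
    have h : (0:ℝ) < (n : ℝ) * r tq ^ (n - 1) := by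
      have : 0 < r tq ^ (n - 1) := pow_pos hrq _
      positivity
    exact mul_nonpos_of_nonneg_of_nonpos h.le hNq
  have hslope : deriv Nrn c < 0 := by
    rw [hderiv]
    apply div_neg_of_neg_of_pos <;> linarith
  rw [hprop c] at hslope
  have h1 : 0 ≤ r c ^ n * GLN c := mul_nonneg (pow_pos hrc n).le (hDEC c)
  have h2 : 0 < r c ^ (n - 2) := pow_pos hrc _
  nlinarith
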